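/- Let $F \in \mathcal{O}_K[x,y]$ be a binary cubic with nonzero discriminant $\Delta_F$, Hessian $H$, Jacobian covariant $G$, and $T = \alpha_1 x - \alpha_2 y$. For $x_0, y_0 \in \mathcal{O}_K$ with $F(x_0,y_0) \neq 0$, the Weierstrass curve $E_{x_0,y_0}: Y^2 = X^3 + T X^2 + \frac{T^2+H}{3} X + \frac{T^3 + 3TH + G}{27}$ (with $T = T(x_0,y_0)$ etc.) is an elliptic curve with discriminant $\Delta = 2^4 \Delta_F F(x_0,y_0)^2$ and invariants $c_4 = -2^4 H(x_0,y_0)$, $c_6 = -2^5 G(x_0,y_0)$. -/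

import Mathlib

open MvPolynomial NumberField

set_option maxHeartbeats 2000000 in
/-- **Invariants of the Frey curve.** Let `F(x,y) = α₀x³ + α₁x²y + α₂xy² + α₃y³` be a
binary cubic over `𝓞 K` with nonzero discriminant `Δ_F`, Hessian `H`, Jacobian covariant
`G`, and `T = α₁x - α₂y`. For `x₀, y₀ ∈ 𝓞 K` with `F(x₀,y₀) ≠ 0`, the Weierstrass curve
`E_{x₀,y₀} : Y² = X³ + TX² + ((T²+H)/3)X + (T³+3TH+G)/27` (covariants evaluated at
`(x₀,y₀)`) is an elliptic curve with discriminant `Δ = 2⁴·Δ_F·F(x₀,y₀)²` and invariants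
`c₄ = -2⁴·H(x₀,y₀)`, `c₆ = -2⁵·G(x₀,y₀)`. -/
theorem frey_curve_invariants (K : Type*) [Field K] [NumberField K]
    (α₀ α₁ α₂ α₃ : 𝓞 K)
    (F : MvPolynomial (Fin 2) K)
    (hF : F = C (algebraMap (𝓞 K) K α₀) * X 0 ^ 3 + C (algebraMap (𝓞 K) K α₁) * X 0 ^ 2 * X 1
      + C (algebraMap (𝓞 K) K α₂) * X 0 * X 1 ^ 2 + C (algebraMap (𝓞 K) K α₃) * X 1 ^ 3)
    (Δ : K)
    (hΔ : Δ = algebraMap (𝓞 K) K (18 * α₀ * α₁ * α₂ * α₃ + (α₁ * α₂) ^ 2 - 27 * (α₀ * α₃) ^ 2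
        - 4 * α₀ * α₂ ^ 3 - 4 * α₁ ^ 3 * α₃))
    (hΔ0 : Δ ≠ 0)
    (H G T : MvPolynomial (Fin 2) K)
    (hH : H = C (1 / 4 : K) *
      (pderiv 0 (pderiv 0 F) * pderiv 1 (pderiv 1 F) - pderiv 1 (pderiv 0 F) ^ 2))
    (hG : G = pderiv 0 F * pderiv 1 H - pderiv 1 F * pderiv 0 H)
    (hT : T = C (algebraMap (𝓞 K) K α₁) * X 0 - C (algebraMap (𝓞 K) K α₂) * X 1)
    (x₀ y₀ : 𝓞 K)
    (P : Fin 2 → K)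
    (hP : P = ![algebraMap (𝓞 K) K x₀, algebraMap (𝓞 K) K y₀])
    (hF0 : MvPolynomial.eval P F ≠ 0)
    (W : WeierstrassCurve K)
    (hW : W = ⟨0, MvPolynomial.eval P T, 0,
      (MvPolynomial.eval P T ^ 2 + MvPolynomial.eval P H) / 3,
      (MvPolynomial.eval P T ^ 3 + 3 * MvPolynomial.eval P T * MvPolynomial.eval P H
        + MvPolynomial.eval P G) / 27⟩) :
    W.Δ = 2 ^ 4 * Δ * MvPolynomial.eval P F ^ 2 ∧
      W.c₄ = -2 ^ 4 * MvPolynomial.eval P H ∧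
      W.c₆ = -2 ^ 5 * MvPolynomial.eval P G ∧
      W.IsElliptic := by
  subst hF hH hG hT hP hW hΔ
  set a0 := algebraMap (𝓞 K) K α₀ with ha0
  set a1 := algebraMap (𝓞 K) K α₁ with ha1
  set a2 := algebraMap (𝓞 K) K α₂ with ha2
  set a3 := algebraMap (𝓞 K) K α₃ with ha3
  set x := algebraMap (𝓞 K) K x₀ with hx
  set y := algebraMap (𝓞 K) K y₀ with hy
  set P : Fin 2 → K := ![x, y] with hPdef
  have e01 : pderiv (0 : Fin 2) (X 1 : MvPolynomial (Fin 2) K) = 0 :=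
    pderiv_X_of_ne (by decide)
  have e10 : pderiv (1 : Fin 2) (X 0 : MvPolynomial (Fin 2) K) = 0 :=
    pderiv_X_of_ne (by decide)
  have FP : (C a0 * X 0 ^ 3 + C a1 * X 0 ^ 2 * X 1 + C a2 * X 0 * X 1 ^ 2
      + C a3 * X 1 ^ 3 : MvPolynomial (Fin 2) K)
      = C a0 * (X 0 * X 0 * X 0) + C a1 * (X 0 * X 0) * X 1
        + C a2 * X 0 * (X 1 * X 1) + C a3 * (X 1 * X 1 * X 1) := by ring
  rw [FP] at hF0 ⊢
  have ht : MvPolynomial.eval P (C a1 * X 0 - C a2 * X 1) = a1 * x - a2 * y := by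
    simp [hPdef]
  have hf : MvPolynomial.eval P (C a0 * (X 0 * X 0 * X 0) + C a1 * (X 0 * X 0) * X 1
      + C a2 * X 0 * (X 1 * X 1) + C a3 * (X 1 * X 1 * X 1))
      = a0 * x ^ 3 + a1 * x ^ 2 * y + a2 * x * y ^ 2 + a3 * y ^ 3 := by
    simp only [map_add, map_mul, eval_C, eval_X, hPdef, Matrix.cons_val_zero,
      Matrix.cons_val_one, Matrix.head_cons]
    ring
  have hh : MvPolynomial.eval P (C (1 / 4 : K) *
      (pderiv 0 (pderiv 0 (C a0 * (X 0 * X 0 * X 0) + C a1 * (X 0 * X 0) * X 1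
        + C a2 * X 0 * (X 1 * X 1) + C a3 * (X 1 * X 1 * X 1))) *
       pderiv 1 (pderiv 1 (C a0 * (X 0 * X 0 * X 0) + C a1 * (X 0 * X 0) * X 1
        + C a2 * X 0 * (X 1 * X 1) + C a3 * (X 1 * X 1 * X 1))) -
       pderiv 1 (pderiv 0 (C a0 * (X 0 * X 0 * X 0) + C a1 * (X 0 * X 0) * X 1
        + C a2 * X 0 * (X 1 * X 1) + C a3 * (X 1 * X 1 * X 1))) ^ 2))
      = (3 * a0 * a2 - a1 ^ 2) * x ^ 2 + (9 * a0 * a3 - a1 * a2) * x * y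
        + (3 * a1 * a3 - a2 ^ 2) * y ^ 2 := by
    simp only [map_add, map_sub, map_mul, map_pow, pderiv_mul, pderiv_C,
      pderiv_X_self, e01, e10, zero_mul, mul_zero, mul_one, one_mul,
      add_zero, zero_add, map_zero, map_one, eval_C, eval_X, hPdef,
      Matrix.cons_val_zero, Matrix.cons_val_one, Matrix.head_cons]
    field_simp
    ring
  have hg : MvPolynomial.eval P
      (pderiv 0 (C a0 * (X 0 * X 0 * X 0) + C a1 * (X 0 * X 0) * X 1
        + C a2 * X 0 * (X 1 * X 1) + C a3 * (X 1 * X 1 * X 1)) *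
       pderiv 1 (C (1 / 4 : K) *
        (pderiv 0 (pderiv 0 (C a0 * (X 0 * X 0 * X 0) + C a1 * (X 0 * X 0) * X 1
          + C a2 * X 0 * (X 1 * X 1) + C a3 * (X 1 * X 1 * X 1))) *
         pderiv 1 (pderiv 1 (C a0 * (X 0 * X 0 * X 0) + C a1 * (X 0 * X 0) * X 1
          + C a2 * X 0 * (X 1 * X 1) + C a3 * (X 1 * X 1 * X 1))) -
         pderiv 1 (pderiv 0 (C a0 * (X 0 * X 0 * X 0) + C a1 * (X 0 * X 0) * X 1
          + C a2 * X 0 * (X 1 * X 1) + C a3 * (X 1 * X 1 * X 1))) ^ 2)) -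
       pderiv 1 (C a0 * (X 0 * X 0 * X 0) + C a1 * (X 0 * X 0) * X 1
        + C a2 * X 0 * (X 1 * X 1) + C a3 * (X 1 * X 1 * X 1)) *
       pderiv 0 (C (1 / 4 : K) *
        (pderiv 0 (pderiv 0 (C a0 * (X 0 * X 0 * X 0) + C a1 * (X 0 * X 0) * X 1
          + C a2 * X 0 * (X 1 * X 1) + C a3 * (X 1 * X 1 * X 1))) *
         pderiv 1 (pderiv 1 (C a0 * (X 0 * X 0 * X 0) + C a1 * (X 0 * X 0) * X 1
          + C a2 * X 0 * (X 1 * X 1) + C a3 * (X 1 * X 1 * X 1))) -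
         pderiv 1 (pderiv 0 (C a0 * (X 0 * X 0 * X 0) + C a1 * (X 0 * X 0) * X 1
          + C a2 * X 0 * (X 1 * X 1) + C a3 * (X 1 * X 1 * X 1))) ^ 2)))
      = (2 * a1 ^ 3 - 9 * a0 * a1 * a2 + 27 * a0 ^ 2 * a3) * x ^ 3
        + (3 * a1 ^ 2 * a2 - 18 * a0 * a2 ^ 2 + 27 * a0 * a1 * a3) * x ^ 2 * y
        + (-3 * a1 * a2 ^ 2 + 18 * a1 ^ 2 * a3 - 27 * a0 * a2 * a3) * x * y ^ 2
        + (-2 * a2 ^ 3 + 9 * a1 * a2 * a3 - 27 * a0 * a3 ^ 2) * y ^ 3 := by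
    simp only [map_add, map_sub, map_mul, map_pow, pderiv_mul, pderiv_C,
      pderiv_X_self, e01, e10, zero_mul, mul_zero, mul_one, one_mul,
      add_zero, zero_add, map_zero, map_one, eval_C, eval_X, hPdef,
      Matrix.cons_val_zero, Matrix.cons_val_one, Matrix.head_cons, sq, Derivation.map_one_eq_zero]
    field_simp
    ring
  have hD : algebraMap (𝓞 K) K (18 * α₀ * α₁ * α₂ * α₃ + (α₁ * α₂) ^ 2 - 27 * (α₀ * α₃) ^ 2
      - 4 * α₀ * α₂ ^ 3 - 4 * α₁ ^ 3 * α₃)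
      = 18 * a0 * a1 * a2 * a3 + (a1 * a2) ^ 2 - 27 * (a0 * a3) ^ 2
        - 4 * a0 * a2 ^ 3 - 4 * a1 ^ 3 * a3 := by
    simp only [map_add, map_sub, map_mul, map_pow, map_ofNat]
    rfl
  rw [hf] at hF0
  rw [ht, hf, hh, hg, hD] at *
  set t := a1 * x - a2 * y with htd
  set h := (3 * a0 * a2 - a1 ^ 2) * x ^ 2 + (9 * a0 * a3 - a1 * a2) * x * y
    + (3 * a1 * a3 - a2 ^ 2) * y ^ 2 with hhd
  set g := (2 * a1 ^ 3 - 9 * a0 * a1 * a2 + 27 * a0 ^ 2 * a3) * x ^ 3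
    + (3 * a1 ^ 2 * a2 - 18 * a0 * a2 ^ 2 + 27 * a0 * a1 * a3) * x ^ 2 * y
    + (-3 * a1 * a2 ^ 2 + 18 * a1 ^ 2 * a3 - 27 * a0 * a2 * a3) * x * y ^ 2
    + (-2 * a2 ^ 3 + 9 * a1 * a2 * a3 - 27 * a0 * a3 ^ 2) * y ^ 3 with hgd
  set f := a0 * x ^ 3 + a1 * x ^ 2 * y + a2 * x * y ^ 2 + a3 * y ^ 3 with hfd
  set D := 18 * a0 * a1 * a2 * a3 + (a1 * a2) ^ 2 - 27 * (a0 * a3) ^ 2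
    - 4 * a0 * a2 ^ 3 - 4 * a1 ^ 3 * a3 with hDd
  have syz : 4 * h ^ 3 + g ^ 2 + 27 * D * f ^ 2 = 0 := by
    rw [hhd, hgd, hfd, hDd]; ring
  set W : WeierstrassCurve K := ⟨0, t, 0, (t ^ 2 + h) / 3, (t ^ 3 + 3 * t * h + g) / 27⟩
    with hWd
  have hΔW : W.Δ = 2 ^ 4 * D * f ^ 2 := by
    have h27 : (27 : K) ≠ 0 := by norm_num
    simp only [hWd, WeierstrassCurve.Δ, WeierstrassCurve.b₂, WeierstrassCurve.b₄,
      WeierstrassCurve.b₆, WeierstrassCurve.b₈]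
    field_simp
    linear_combination (-(16 : K) * 27) * syz
  refine ⟨hΔW, ?_, ?_, ?_⟩
  · simp only [hWd, WeierstrassCurve.c₄, WeierstrassCurve.b₂, WeierstrassCurve.b₄]
    field_simp
    ring
  · simp only [hWd, WeierstrassCurve.c₆, WeierstrassCurve.b₂, WeierstrassCurve.b₄,
      WeierstrassCurve.b₆]
    field_simp
    ring
  · refine ⟨isUnit_iff_ne_zero.mpr ?_⟩
    rw [hΔW]
    exact mul_ne_zero (mul_ne_zero (by norm_num) hΔ0) (pow_ne_zero 2 hF0)
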